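/- The map from semistandard Young tableaux in the alphabet [n] to integer D-tight arrays, sending T to the array A(T) with a_{ij}(T) equal to the number of entries i in row j of T, is a bijection onto the set of integer points of the cone D(n). -/

import Mathlib

open Finset

/-- An array `A i j` (0-indexed: entry `i`, row `j`) is upper-triangular of size `n`. -/
def TriangularArray (n : ℕ) (A : ℕ → ℕ → ℕ) : Prop :=
  ∀ i j, (i < j ∨ n ≤ i) → A i j = 0

/-- The D-tightness inequalities defining the cone `D(n)` (0-indexed). -/
def DTight (n : ℕ) (A : ℕ → ℕ → ℕ) : Prop :=
  ∀ j, j + 1 < n → ∀ i, i < n →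
    (∑ k ∈ range (i + 1), A k (j + 1)) ≤ ∑ k ∈ range i, A k j

/-- The array of a semistandard Young tableau: `a_{ij}` is the number of boxes
in row `j` of `T` filled with entry `i`. -/
def tableauArray (μ : YoungDiagram) (T : SemistandardYoungTableau μ) : ℕ → ℕ → ℕ :=
  fun i j => ((range (μ.rowLen j)).filter (fun k => T j k = i)).card

/-- Semistandard Young tableaux in the alphabet `[n]` (entries `< n`, 0-indexed). -/
def SSYTAlphabet (n : ℕ) :=
  {p : Σ μ : YoungDiagram, SemistandardYoungTableau μ // ∀ c ∈ p.1.cells, p.2 c.1 c.2 < n}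

namespace TableauBij

/-! ### Counting lemmas -/

lemma sum_card_filter (s : Finset ℕ) (f : ℕ → ℕ) (i : ℕ) :
    ∑ m ∈ range i, (s.filter (fun k => f k = m)).card
      = (s.filter (fun k => f k < i)).card := by
  induction i with
  | zero => simp
  | succ i ih =>
    have hset : s.filter (fun k => f k < i + 1)
        = s.filter (fun k => f k < i) ∪ s.filter (fun k => f k = i) := by
      ext k
      simp only [mem_filter, mem_union]
      by_cases hks : k ∈ s <;> simp [hks] <;> omega
    have hdisj : Disjoint (s.filter (fun k => f k < i)) (s.filter (fun k => f k = i)) := by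
      simp only [disjoint_left, mem_filter]
      rintro a ⟨-, h1⟩ ⟨-, h2⟩
      omega
    rw [sum_range_succ, ih, hset, card_union_of_disjoint hdisj]

lemma nat_eq_of_lt_iff {a b : ℕ} (h : ∀ k, k < a ↔ k < b) : a = b := by
  rcases lt_trichotomy a b with h' | h' | h'
  · exact absurd ((h a).mpr h') (lt_irrefl a)
  · exact h'
  · exact absurd ((h b).mp h') (lt_irrefl b)

/-! ### Forward direction -/

variable {μ : YoungDiagram} (T : SemistandardYoungTableau μ)

lemma sum_tableauArray (i j : ℕ) :
    ∑ m ∈ range i, tableauArray μ T m j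
      = ((range (μ.rowLen j)).filter (fun k => T j k < i)).card :=
  sum_card_filter (range (μ.rowLen j)) (fun k => T j k) i

lemma le_entry : ∀ j k, (j, k) ∈ μ → j ≤ T j k := by
  intro j
  induction j with
  | zero => intro k _; exact Nat.zero_le _
  | succ j ih =>
    intro k hc
    have hm : (j, k) ∈ μ := μ.up_left_mem (Nat.le_succ j) le_rfl hc
    have h1 := T.col_strict (i1 := j) (i2 := j + 1) (by omega) hc
    have h2 := ih k hm
    omega

lemma triangular_of_ssyt {n : ℕ} (hT : ∀ c ∈ μ.cells, T c.1 c.2 < n) :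
    TriangularArray n (tableauArray μ T) := by
  intro i j hij
  unfold tableauArray
  rw [card_eq_zero, filter_eq_empty_iff]
  intro k hk
  rw [mem_range, ← YoungDiagram.mem_iff_lt_rowLen] at hk
  rcases hij with h | h
  · have := le_entry T j k hk
    omega
  · have := hT (j, k) ((YoungDiagram.mem_cells _).mpr hk)
    simp only at this
    omega

lemma rowLen_eq_sum {n : ℕ} (hT : ∀ c ∈ μ.cells, T c.1 c.2 < n) (j : ℕ) :
    μ.rowLen j = ∑ m ∈ range n, tableauArray μ T m j := by
  rw [sum_tableauArray, filter_true_of_mem, card_range]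
  intro k hk
  rw [mem_range, ← YoungDiagram.mem_iff_lt_rowLen] at hk
  exact hT (j, k) ((YoungDiagram.mem_cells _).mpr hk)

lemma dtight_of_ssyt (n : ℕ) : DTight n (tableauArray μ T) := by
  intro j hj i hi
  rw [sum_tableauArray, sum_tableauArray]
  apply card_le_card
  intro k hk
  simp only [mem_filter, mem_range] at hk ⊢
  have hmem : (j + 1, k) ∈ μ := YoungDiagram.mem_iff_lt_rowLen.mpr hk.1
  have h1 : T j k < T (j + 1) k := T.col_strict (Nat.lt_succ_self j) hmem
  have h2 : k < μ.rowLen j := lt_of_lt_of_le hk.1 (μ.rowLen_anti j (j + 1) (Nat.le_succ j))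
  exact ⟨h2, by omega⟩

lemma entry_lt_iff {j k : ℕ} (hk : k < μ.rowLen j) (i : ℕ) :
    T j k < i ↔ k < ∑ m ∈ range i, tableauArray μ T m j := by
  rw [sum_tableauArray]
  constructor
  · intro h
    have hsub : range (k + 1) ⊆ (range (μ.rowLen j)).filter (fun m => T j m < i) := by
      intro m hm
      rw [mem_range] at hm
      refine mem_filter.mpr ⟨mem_range.mpr (by omega), ?_⟩
      have := T.row_weak_of_le (by omega : m ≤ k) (YoungDiagram.mem_iff_lt_rowLen.mpr hk)
      omega
    have := card_le_card hsub
    rw [card_range] at this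
    omega
  · intro h
    by_contra hcon
    push_neg at hcon
    have hsub : (range (μ.rowLen j)).filter (fun m => T j m < i) ⊆ range k := by
      intro m hm
      rw [mem_filter, mem_range] at hm
      rw [mem_range]
      by_contra hmk
      push_neg at hmk
      have := T.row_weak_of_le hmk (YoungDiagram.mem_iff_lt_rowLen.mpr hm.1)
      omega
    have := card_le_card hsub
    rw [card_range] at this
    omega

lemma inj_aux {μ ν : YoungDiagram} (T : SemistandardYoungTableau μ)
    (U : SemistandardYoungTableau ν) (n : ℕ)
    (hT : ∀ c ∈ μ.cells, T c.1 c.2 < n) (hU : ∀ c ∈ ν.cells, U c.1 c.2 < n)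
    (h : tableauArray μ T = tableauArray ν U) :
    (⟨μ, T⟩ : Σ μ : YoungDiagram, SemistandardYoungTableau μ) = ⟨ν, U⟩ := by
  have hrow : ∀ j, μ.rowLen j = ν.rowLen j := by
    intro j
    rw [rowLen_eq_sum T hT, rowLen_eq_sum U hU, h]
  have hμν : μ = ν := by
    have hcells : μ.cells = ν.cells := by
      ext c
      obtain ⟨a, b⟩ := c
      rw [YoungDiagram.mem_cells _, YoungDiagram.mem_cells _, YoungDiagram.mem_iff_lt_rowLen,
        YoungDiagram.mem_iff_lt_rowLen, hrow]
    cases μ; cases ν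
    simpa using hcells
  subst hμν
  have hTU : T = U := by
    ext j k
    by_cases hc : (j, k) ∈ μ
    · have hk : k < μ.rowLen j := YoungDiagram.mem_iff_lt_rowLen.mp hc
      have key : ∀ i, T j k < i ↔ U j k < i := by
        intro i
        rw [entry_lt_iff T hk i, entry_lt_iff U hk i, h]
      have a := (key (U j k + 1)).mpr (Nat.lt_succ_self _)
      have b := (key (T j k + 1)).mp (Nat.lt_succ_self _)
      omega
    · rw [T.zeros hc, U.zeros hc]
  rw [hTU]

/-! ### Inverse construction -/

/-- partial sums of column `j` of the array -/
def S (A : ℕ → ℕ → ℕ) (j i : ℕ) : ℕ := ∑ m ∈ range i, A m j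

/-- length of row `j` -/
def rowL (A : ℕ → ℕ → ℕ) (n j : ℕ) : ℕ := ∑ m ∈ range n, A m j

lemma rowL_eq_S (A : ℕ → ℕ → ℕ) (n j : ℕ) : rowL A n j = S A j n := rfl

lemma S_mono (A : ℕ → ℕ → ℕ) {j i1 i2 : ℕ} (h : i1 ≤ i2) : S A j i1 ≤ S A j i2 :=
  sum_le_sum_of_subset (range_subset_range.mpr h)

variable {A : ℕ → ℕ → ℕ} {n : ℕ}

lemma S_stable (hTri : TriangularArray n A) {j i : ℕ} (h : n ≤ i) :
    S A j i = rowL A n j :=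
  (Finset.sum_subset (range_subset_range.mpr h)
    (fun x _ hx => hTri x j (Or.inr (by rwa [mem_range, not_lt] at hx)))).symm

lemma S_le_rowL (hTri : TriangularArray n A) (j i : ℕ) : S A j i ≤ rowL A n j := by
  rcases le_total i n with h | h
  · rw [rowL_eq_S]; exact S_mono A h
  · exact le_of_eq (S_stable hTri h)

lemma rowL_eq_zero (hTri : TriangularArray n A) {j : ℕ} (h : n ≤ j) : rowL A n j = 0 :=
  sum_eq_zero fun m hm => hTri m j (Or.inl (lt_of_lt_of_le (mem_range.mp hm) h))

lemma rowL_pos_lt (hTri : TriangularArray n A) {j : ℕ} (h : 0 < rowL A n j) : j < n := by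
  by_contra hc
  push_neg at hc
  rw [rowL_eq_zero hTri hc] at h
  omega

lemma rowL_anti (hTri : TriangularArray n A) (hDT : DTight n A) : Antitone (rowL A n) := by
  apply antitone_nat_of_succ_le
  intro j
  by_cases hj : j + 1 < n
  · have hn : 1 ≤ n := by omega
    have hd := hDT j hj (n - 1) (by omega)
    have h1 : n - 1 + 1 = n := by omega
    rw [h1] at hd
    calc rowL A n (j + 1) = ∑ k ∈ range n, A k (j + 1) := rfl
      _ ≤ ∑ k ∈ range (n - 1), A k j := hd
      _ ≤ rowL A n j := sum_le_sum_of_subset (range_subset_range.mpr (by omega))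
  · rw [rowL_eq_zero hTri (by omega)]
    exact Nat.zero_le _

/-- The Young diagram whose row lengths are the column sums of `A`. -/
def shape (A : ℕ → ℕ → ℕ) (n : ℕ) (hTri : TriangularArray n A) (hDT : DTight n A) :
    YoungDiagram where
  cells := ((range n) ×ˢ (range (rowL A n 0))).filter (fun c => c.2 < rowL A n c.1)
  isLowerSet := by
    rintro ⟨j2, k2⟩ ⟨j1, k1⟩ ⟨hj, hk⟩ hc
    simp only [Finset.coe_filter, Set.mem_setOf_eq, mem_product, mem_range] at hc ⊢
    obtain ⟨⟨hj2, hk2⟩, hrow⟩ := hc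
    have h1 : k1 < rowL A n j1 :=
      lt_of_le_of_lt hk (lt_of_lt_of_le hrow (rowL_anti hTri hDT hj))
    exact ⟨⟨lt_of_le_of_lt hj hj2, lt_of_le_of_lt hk hk2⟩, h1⟩

lemma mem_shape (hTri : TriangularArray n A) (hDT : DTight n A) {j k : ℕ} :
    (j, k) ∈ shape A n hTri hDT ↔ k < rowL A n j := by
  rw [← YoungDiagram.mem_cells]
  show (j, k) ∈ ((range n) ×ˢ (range (rowL A n 0))).filter _ ↔ _
  simp only [mem_filter, mem_product, mem_range]
  constructor
  · tauto
  · intro h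
    have hj : j < n := rowL_pos_lt hTri (by omega)
    have hk0 : k < rowL A n 0 := lt_of_lt_of_le h (rowL_anti hTri hDT (Nat.zero_le j))
    exact ⟨⟨hj, hk0⟩, h⟩

lemma rowLen_shape (hTri : TriangularArray n A) (hDT : DTight n A) (j : ℕ) :
    (shape A n hTri hDT).rowLen j = rowL A n j := by
  apply nat_eq_of_lt_iff
  intro k
  rw [← YoungDiagram.mem_iff_lt_rowLen, mem_shape hTri hDT]

open Classical in
/-- The entry of the tableau reconstructed from the array `A`. -/
noncomputable def entryFn (A : ℕ → ℕ → ℕ) (j k : ℕ) : ℕ :=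
  if h : ∃ i, k < S A j (i + 1) then Nat.find h else 0

lemma entryFn_spec (hTri : TriangularArray n A) {j k : ℕ} (hk : k < rowL A n j) {i : ℕ} :
    entryFn A j k = i ↔ S A j i ≤ k ∧ k < S A j (i + 1) := by
  classical
  have hex : ∃ i, k < S A j (i + 1) := ⟨n, lt_of_lt_of_le (rowL_eq_S A n j ▸ hk) (S_mono A (Nat.le_succ n))⟩
  rw [entryFn, dif_pos hex]
  constructor
  · rintro rfl
    refine ⟨?_, Nat.find_spec hex⟩
    rcases Nat.eq_zero_or_pos (Nat.find hex) with h0 | h0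
    · rw [h0]
      show S A j 0 ≤ k
      simp [S]
    · have hmin := Nat.find_min hex (Nat.sub_lt h0 one_pos)
      push_neg at hmin
      have h1 : Nat.find hex - 1 + 1 = Nat.find hex := by omega
      rwa [h1] at hmin
  · rintro ⟨h1, h2⟩
    have hle : Nat.find hex ≤ i := Nat.find_le h2
    rcases eq_or_lt_of_le hle with h | h
    · exact h
    · exfalso
      have hs := Nat.find_spec hex
      have hm : S A j (Nat.find hex + 1) ≤ S A j i := S_mono A (by omega)
      omega

lemma entryFn_lt (hTri : TriangularArray n A) {j k : ℕ} (hk : k < rowL A n j) :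
    entryFn A j k < n := by
  have h := (entryFn_spec hTri hk (i := entryFn A j k)).mp rfl
  by_contra hc
  push_neg at hc
  have h1 : S A j n ≤ S A j (entryFn A j k) := S_mono A hc
  have h2 : rowL A n j = S A j n := rfl
  omega

lemma entryFn_zero (hTri : TriangularArray n A) {j k : ℕ} (hk : ¬ k < rowL A n j) :
    entryFn A j k = 0 := by
  classical
  rw [entryFn, dif_neg]
  rintro ⟨i, hi⟩
  exact hk (lt_of_lt_of_le hi (S_le_rowL hTri j (i + 1)))

lemma entryFn_row_weak (hTri : TriangularArray n A) {j k1 k2 : ℕ} (h : k1 < k2)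
    (hk : k2 < rowL A n j) : entryFn A j k1 ≤ entryFn A j k2 := by
  have hk1 : k1 < rowL A n j := by omega
  have h2 := (entryFn_spec hTri hk (i := entryFn A j k2)).mp rfl
  have h1 := (entryFn_spec hTri hk1 (i := entryFn A j k1)).mp rfl
  by_contra hc
  push_neg at hc
  have hm : S A j (entryFn A j k2 + 1) ≤ S A j (entryFn A j k1) := S_mono A (by omega)
  omega

lemma entryFn_col_succ (hTri : TriangularArray n A) (hDT : DTight n A) {j k : ℕ}
    (hk : k < rowL A n (j + 1)) : entryFn A j k < entryFn A (j + 1) k := by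
  have hj1 : j + 1 < n := rowL_pos_lt hTri (by omega)
  have hkj : k < rowL A n j := lt_of_lt_of_le hk (rowL_anti hTri hDT (Nat.le_succ j))
  have h2 := (entryFn_spec hTri hk (i := entryFn A (j + 1) k)).mp rfl
  have h1 := (entryFn_spec hTri hkj (i := entryFn A j k)).mp rfl
  have he2 : entryFn A (j + 1) k < n := entryFn_lt hTri hk
  have hd : S A (j + 1) (entryFn A (j + 1) k + 1) ≤ S A j (entryFn A (j + 1) k) :=
    hDT j hj1 (entryFn A (j + 1) k) he2
  by_contra hc
  push_neg at hc
  have hm : S A j (entryFn A (j + 1) k) ≤ S A j (entryFn A j k) := S_mono A hc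
  omega

lemma entryFn_col_strict (hTri : TriangularArray n A) (hDT : DTight n A) {j1 j2 k : ℕ}
    (h : j1 < j2) (hk : k < rowL A n j2) : entryFn A j1 k < entryFn A j2 k := by
  have key : ∀ d k, k < rowL A n (j1 + d + 1) → entryFn A j1 k < entryFn A (j1 + d + 1) k := by
    intro d
    induction d with
    | zero => intro k hk; exact entryFn_col_succ hTri hDT hk
    | succ d ih =>
      intro k hk
      have hk' : k < rowL A n (j1 + d + 1) :=
        lt_of_lt_of_le hk (rowL_anti hTri hDT (by omega))
      exact lt_trans (ih k hk') (entryFn_col_succ hTri hDT hk)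
  obtain ⟨d, rfl⟩ : ∃ d, j2 = j1 + d + 1 := ⟨j2 - j1 - 1, by omega⟩
  exact key d k hk

/-- The tableau reconstructed from the array `A`. -/
noncomputable def tab (hTri : TriangularArray n A) (hDT : DTight n A) :
    SemistandardYoungTableau (shape A n hTri hDT) where
  entry := entryFn A
  row_weak' := by
    intro i j1 j2 h hc
    rw [mem_shape hTri hDT] at hc
    exact entryFn_row_weak hTri h hc
  col_strict' := by
    intro i1 i2 j h hc
    rw [mem_shape hTri hDT] at hc
    exact entryFn_col_strict hTri hDT h hc
  zeros' := by
    intro i j hc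
    rw [mem_shape hTri hDT] at hc
    exact entryFn_zero hTri hc

lemma tab_apply (hTri : TriangularArray n A) (hDT : DTight n A) (j k : ℕ) :
    tab hTri hDT j k = entryFn A j k := rfl

lemma tab_lt (hTri : TriangularArray n A) (hDT : DTight n A) :
    ∀ c ∈ (shape A n hTri hDT).cells, (tab hTri hDT) c.1 c.2 < n := by
  rintro ⟨j, k⟩ hc
  rw [YoungDiagram.mem_cells, mem_shape hTri hDT] at hc
  exact entryFn_lt hTri hc

lemma tab_array (hTri : TriangularArray n A) (hDT : DTight n A) :
    tableauArray (shape A n hTri hDT) (tab hTri hDT) = A := by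
  funext i j
  unfold tableauArray
  rw [rowLen_shape hTri hDT]
  have hfil : (range (rowL A n j)).filter (fun k => (tab hTri hDT) j k = i)
      = Ico (S A j i) (S A j (i + 1)) := by
    ext k
    rw [mem_filter, mem_range, mem_Ico]
    simp only [tab_apply]
    constructor
    · rintro ⟨hk, he⟩
      exact (entryFn_spec hTri hk).mp he
    · rintro ⟨h1, h2⟩
      have hk : k < rowL A n j := lt_of_lt_of_le h2 (S_le_rowL hTri j (i + 1))
      exact ⟨hk, (entryFn_spec hTri hk).mpr ⟨h1, h2⟩⟩
  rw [hfil, Nat.card_Ico]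
  have hs : S A j (i + 1) = S A j i + A i j := sum_range_succ _ _
  omega

end TableauBij

/-- the map `T ↦ A(T)` is a bijection from semistandard Young
tableaux in the alphabet `[n]` onto the integer points of the cone `D(n)`. -/
theorem tableauArray_bijOn (n : ℕ) :
    Set.BijOn (fun p : SSYTAlphabet n => tableauArray p.1.1 p.1.2)
      Set.univ {A | TriangularArray n A ∧ DTight n A} := by
  refine ⟨?_, ?_, ?_⟩
  · rintro ⟨⟨μ, T⟩, hT⟩ -
    exact ⟨TableauBij.triangular_of_ssyt T hT, TableauBij.dtight_of_ssyt T n⟩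
  · rintro ⟨⟨μ, T⟩, hT⟩ - ⟨⟨ν, U⟩, hU⟩ - h
    simp only at h
    exact Subtype.ext (TableauBij.inj_aux T U n hT hU h)
  · rintro A ⟨hTri, hDT⟩
    exact ⟨⟨⟨TableauBij.shape A n hTri hDT, TableauBij.tab hTri hDT⟩,
      TableauBij.tab_lt hTri hDT⟩, Set.mem_univ _, TableauBij.tab_array hTri hDT⟩
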